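/- Let q ≥ 2 be an integer and let β_1, …, β_q ∈ (0,1) satisfy Σ_{k=1}^q β_k ≤ 1. Then (q − 1) · ∏_{k=1}^q √(β_k/(1 − β_k)) ≤ (q − 1)^{1 − q/2}, and consequently (q − 1) · ∏_{k=1}^q √(β_k/(1 − β_k)) ≤ 1. -/

import Mathlib

/-- For an integer `q ≥ 2` and reals `β_1, …, β_q ∈ (0,1)` with `Σ β_k ≤ 1`,
`(q - 1) · ∏_k √(β_k/(1 - β_k)) ≤ (q - 1)^(1 - q/2) ≤ 1`,
where the exponent is the real power of the positive base `q - 1`. -/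
theorem loop_vertex_factor_bound (q : ℕ) (hq : 2 ≤ q) (β : Fin q → ℝ)
    (hβ : ∀ k, β k ∈ Set.Ioo (0 : ℝ) 1) (hsum : ∑ k, β k ≤ 1) :
    ((q : ℝ) - 1) * ∏ k, Real.sqrt (β k / (1 - β k)) ≤
        ((q : ℝ) - 1) ^ ((1 : ℝ) - (q : ℝ) / 2) ∧
      ((q : ℝ) - 1) * ∏ k, Real.sqrt (β k / (1 - β k)) ≤ 1 := by
  have hq2 : (2 : ℝ) ≤ (q : ℝ) := by exact_mod_cast hq
  have hc0 : (0 : ℝ) < (q : ℝ) - 1 := by linarith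
  set c : ℝ := (q : ℝ) - 1 with hc
  have hβpos : ∀ k, 0 < β k := fun k => (hβ k).1
  have hβ1 : ∀ k, β k < 1 := fun k => (hβ k).2
  have hprodpos : 0 < ∏ k, β k := Finset.prod_pos fun k _ => hβpos k
  have hcard : ∀ k : Fin q, ((Finset.univ.erase k).card : ℝ) = c := by
    intro k
    rw [Finset.card_erase_of_mem (Finset.mem_univ k), Finset.card_univ, Fintype.card_fin]
    push_cast [Nat.cast_sub (by omega : 1 ≤ q)]
    simp [hc]
  -- AM-GM: geometric mean of β over erase k ≤ S k / c
  have hG : ∀ k : Fin q, ((∏ j ∈ Finset.univ.erase k, β j) ^ ((1:ℝ)/c)) * c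
      ≤ ∑ j ∈ Finset.univ.erase k, β j := by
    intro k
    have h := Real.geom_mean_le_arith_mean_weighted (Finset.univ.erase k)
      (fun _ => 1/c) β (fun i _ => by positivity)
      (by rw [Finset.sum_const, nsmul_eq_mul, hcard k]; field_simp)
      (fun i _ => (hβpos i).le)
    calc ((∏ j ∈ Finset.univ.erase k, β j) ^ ((1:ℝ)/c)) * c
        = (∏ j ∈ Finset.univ.erase k, β j ^ ((1:ℝ)/c)) * c := by
          rw [← Real.finset_prod_rpow _ _ (fun i _ => (hβpos i).le)]
      _ ≤ (∑ j ∈ Finset.univ.erase k, (1/c) * β j) * c := by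
          exact mul_le_mul_of_nonneg_right h hc0.le
      _ = ∑ j ∈ Finset.univ.erase k, β j := by
          rw [← Finset.mul_sum]; field_simp
  -- key: product of ratios ≤ c ^ (-(q:ℝ))
  have key : ∏ k, β k / (1 - β k) ≤ c ^ (-(q : ℝ)) := by
    have step1 : ∀ k : Fin q, β k / (1 - β k)
        ≤ β k / (((∏ j ∈ Finset.univ.erase k, β j) ^ ((1:ℝ)/c)) * c) := by
      intro k
      have hSle : ∑ j ∈ Finset.univ.erase k, β j ≤ 1 - β k := by
        have : β k + ∑ j ∈ Finset.univ.erase k, β j = ∑ j, β j := by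
          rw [Finset.add_sum_erase _ _ (Finset.mem_univ k)]
        linarith
      have hGpos : 0 < ((∏ j ∈ Finset.univ.erase k, β j) ^ ((1:ℝ)/c)) * c := by
        have : 0 < ∏ j ∈ Finset.univ.erase k, β j :=
          Finset.prod_pos fun j _ => hβpos j
        positivity
      exact div_le_div_of_nonneg_left (hβpos k).le hGpos (le_trans (hG k) hSle)
    calc ∏ k, β k / (1 - β k)
        ≤ ∏ k, β k / (((∏ j ∈ Finset.univ.erase k, β j) ^ ((1:ℝ)/c)) * c) := by
          apply Finset.prod_le_prod
          · intro k _
            exact div_nonneg (hβpos k).le (by linarith [hβ1 k])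
          · intro k _; exact step1 k
      _ = c ^ (-(q : ℝ)) := by
          rw [Finset.prod_div_distrib, Finset.prod_mul_distrib, Finset.prod_const,
            Real.finset_prod_rpow _ _ (fun k _ =>
              (Finset.prod_pos fun j _ => hβpos j).le)]
          have h1 : ∀ x : Fin q, ∏ j ∈ Finset.univ.erase x, β j = (∏ k, β k) / β x := by
            intro x
            rw [eq_div_iff (hβpos x).ne', mul_comm]
            exact Finset.mul_prod_erase _ _ (Finset.mem_univ x)
          rw [Finset.prod_congr rfl fun x _ => h1 x, Finset.prod_div_distrib,
            Finset.prod_const, Finset.card_univ, Fintype.card_fin]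
          have h2 : (∏ k, β k) ^ q / ∏ k, β k = (∏ k, β k) ^ (q - 1) := by
            rw [pow_sub₀ _ hprodpos.ne' (by omega : 1 ≤ q), pow_one, div_eq_mul_inv]
          rw [h2]
          have h3 : ((∏ k, β k) ^ (q - 1) : ℝ) ^ ((1:ℝ)/c) = ∏ k, β k := by
            rw [← Real.rpow_natCast (∏ k, β k) (q - 1), ← Real.rpow_mul hprodpos.le]
            have : ((q - 1 : ℕ) : ℝ) = c := by
              rw [Nat.cast_sub (by omega : 1 ≤ q)]; push_cast; rfl
            rw [this, mul_one_div, div_self hc0.ne', Real.rpow_one]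
          rw [h3, Real.rpow_neg hc0.le, Real.rpow_natCast]
          field_simp
  -- conclude
  have hPnn : ∀ k : Fin q, (0:ℝ) ≤ β k / (1 - β k) :=
    fun k => div_nonneg (hβpos k).le (by linarith [hβ1 k])
  have hmain : ∏ k, Real.sqrt (β k / (1 - β k)) ≤ c ^ (-(q:ℝ)/2) := by
    calc ∏ k, Real.sqrt (β k / (1 - β k))
        = (∏ k, β k / (1 - β k)) ^ ((1:ℝ)/2) := by
          rw [← Real.finset_prod_rpow _ _ (fun k _ => hPnn k)]
          exact Finset.prod_congr rfl fun k _ => Real.sqrt_eq_rpow _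
      _ ≤ (c ^ (-(q:ℝ))) ^ ((1:ℝ)/2) := by
          apply Real.rpow_le_rpow (Finset.prod_nonneg fun k _ => hPnn k) key
          norm_num
      _ = c ^ (-(q:ℝ)/2) := by
          rw [← Real.rpow_mul hc0.le, neg_mul, mul_one_div, neg_div]
  have hleft : c * ∏ k, Real.sqrt (β k / (1 - β k)) ≤ c ^ ((1:ℝ) - (q:ℝ)/2) := by
    have : c ^ ((1:ℝ) - (q:ℝ)/2) = c * c ^ (-(q:ℝ)/2) := by
      rw [sub_eq_add_neg, Real.rpow_add hc0, Real.rpow_one, neg_div]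
    rw [this]
    exact mul_le_mul_of_nonneg_left hmain hc0.le
  refine ⟨hleft, hleft.trans ?_⟩
  apply Real.rpow_le_one_of_one_le_of_nonpos (by linarith : (1:ℝ) ≤ c)
  linarith
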